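/- Let b be the sequence with b_0 = 1 and ∑_{l=0}^{p} (-1)^l C(p,l)^2 b_l = 0 for all p ≥ 1. Then every b_p is a positive integer. -/

import Mathlib

/-- An alternating sum of a nonnegative, decreasing sequence is nonnegative. -/
lemma alt_sum_nonneg (g : ℕ → ℤ) (h0 : ∀ k, 0 ≤ g k) (hd : ∀ k, g (k + 1) ≤ g k) :
    ∀ n, 0 ≤ ∑ j ∈ Finset.range n, (-1 : ℤ) ^ j * g j := by
  have heven : ∀ m, 0 ≤ ∑ j ∈ Finset.range (2 * m), (-1 : ℤ) ^ j * g j := by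
    intro m
    induction m with
    | zero => simp
    | succ m ih =>
      have h2 : 2 * (m + 1) = (2 * m) + 1 + 1 := by ring
      rw [h2, Finset.sum_range_succ, Finset.sum_range_succ]
      have e1 : (-1 : ℤ) ^ (2 * m) = 1 := by rw [pow_mul]; norm_num
      have e2 : (-1 : ℤ) ^ (2 * m + 1) = -1 := by rw [pow_succ, e1]; norm_num
      rw [e1, e2]
      have hdm := hd (2 * m)
      linarith
  intro n
  rcases Nat.even_or_odd n with ⟨m, hm⟩ | ⟨m, hm⟩
  · have hn : n = 2 * m := by omega
    rw [hn]; exact heven m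
  · have hn : n = 2 * m + 1 := by omega
    rw [hn, Finset.sum_range_succ]
    have e1 : (-1 : ℤ) ^ (2 * m) = 1 := by rw [pow_mul]; norm_num
    rw [e1]
    have := heven m
    have := h0 (2 * m)
    linarith

/-- Every term of the sequence `b` (OEIS A000275), defined by
`b 0 = 1` and `∑_{l=0}^{p} (-1)^l C(p,l)^2 b l = 0` for all `p ≥ 1`,
is a positive integer. -/
theorem stmt1 (b : ℕ → ℤ) (hb0 : b 0 = 1)
    (hrec : ∀ p : ℕ, 1 ≤ p →
      (∑ l ∈ Finset.range (p + 1), (-1 : ℤ) ^ l * (p.choose l : ℤ) ^ 2 * b l) = 0) :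
    ∀ p : ℕ, 0 < b p := by
  -- reversed form of the recurrence
  have key : ∀ p : ℕ, 1 ≤ p →
      b p = ∑ k ∈ Finset.range p, (-1 : ℤ) ^ k * ((p.choose (k + 1) : ℤ)) ^ 2 * b (p - 1 - k) := by
    intro p hp
    have h := hrec p hp
    rw [← Finset.sum_range_reflect] at h
    rw [Finset.sum_range_succ'] at h
    have hsimp : ∀ k ∈ Finset.range p,
        (-1 : ℤ) ^ (p + 1 - 1 - (k + 1)) * ((p.choose (p + 1 - 1 - (k + 1)) : ℤ)) ^ 2
            * b (p + 1 - 1 - (k + 1)) =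
        (-1 : ℤ) ^ p * (-((-1 : ℤ) ^ k * ((p.choose (k + 1) : ℤ)) ^ 2 * b (p - 1 - k))) := by
      intro k hk
      have hk' : k < p := Finset.mem_range.mp hk
      have e1 : p + 1 - 1 - (k + 1) = p - 1 - k := by omega
      have e2 : p.choose (p - 1 - k) = p.choose (k + 1) := by
        have e : p - 1 - k = p - (k + 1) := by omega
        rw [e, Nat.choose_symm (by omega)]
      rw [e1, e2]
      have e3 : (-1 : ℤ) ^ p = (-1 : ℤ) ^ (p - 1 - k) * (-1 : ℤ) ^ k * (-1) := by
        have e : (-1 : ℤ) ^ ((p - 1 - k) + (k + 1))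
            = (-1 : ℤ) ^ (p - 1 - k) * (-1 : ℤ) ^ k * (-1) := by
          rw [pow_add, pow_add, pow_one, mul_assoc]
        rw [← e]
        congr 1
        omega
      rw [e3]
      have hsq : (-1 : ℤ) ^ k * (-1 : ℤ) ^ k = 1 := by
        rw [← pow_add, ← two_mul, pow_mul]; norm_num
      linear_combination (-((-1 : ℤ) ^ (p - 1 - k) * ((p.choose (k + 1) : ℤ)) ^ 2
        * b (p - 1 - k))) * hsq
    rw [Finset.sum_congr rfl hsimp] at h
    simp only [Nat.add_sub_cancel, Nat.sub_zero, Nat.choose_self, Nat.cast_one, one_pow,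
      mul_one, one_mul] at h
    rw [← Finset.mul_sum] at h
    rcases Nat.even_or_odd p with hpar | hpar
    · rw [hpar.neg_one_pow] at h
      rw [Finset.sum_neg_distrib] at h
      linarith
    · rw [hpar.neg_one_pow] at h
      rw [Finset.sum_neg_distrib] at h
      linarith
  -- the main invariant, by strong induction
  have main : ∀ p : ℕ, 0 < b p ∧ (p : ℤ) ^ 2 * b (p - 1) ≤ 2 * b p := by
    intro p
    induction p using Nat.strong_induction_on with
    | _ p ih =>
      rcases Nat.eq_zero_or_pos p with rfl | hp
      · refine ⟨by rw [hb0]; norm_num, ?_⟩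
        simp [hb0]
      · -- the alternating sequence
        set g : ℕ → ℤ := fun j =>
          if j = 0 then (p : ℤ) ^ 2 * b (p - 1)
          else 2 * ((p.choose (j + 1) : ℤ)) ^ 2 * b (p - 1 - j) with hg
        have hbpos : ∀ m, m < p → 0 < b m := fun m hm => (ih m hm).1
        have h0 : ∀ k, 0 ≤ g k := by
          intro k
          rcases Nat.eq_zero_or_pos k with rfl | hk
          · simp only [hg, if_pos rfl]
            have := hbpos (p - 1) (by omega)
            positivity
          · simp only [hg, if_neg hk.ne']
            have hb := (hbpos (p - 1 - k) (by omega)).le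
            have : (0 : ℤ) ≤ ((p.choose (k + 1) : ℤ)) ^ 2 := sq_nonneg _
            nlinarith
        have hd : ∀ k, g (k + 1) ≤ g k := by
          intro k
          rcases Nat.eq_zero_or_pos k with rfl | hk
          · -- g 1 ≤ g 0
            simp only [hg, zero_add, if_neg (one_ne_zero), if_pos rfl]
            rcases eq_or_lt_of_le (by omega : 1 ≤ p) with hp1 | hp2
            · -- p = 1
              rw [← hp1]
              rw [show (1 : ℕ).choose 2 = 0 from rfl]
              simp [hb0]
            · -- p ≥ 2
              have hch := Nat.choose_succ_right_eq p 1
              rw [Nat.choose_one_right] at hch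
              have hchz : ((p.choose 2 : ℤ)) * 2 = (p : ℤ) * ((p : ℤ) - 1) := by
                have := congrArg (Nat.cast : ℕ → ℤ) hch
                push_cast [Nat.cast_sub (by omega : 1 ≤ p)] at this
                linarith [this]
              have hinv := (ih (p - 1) (by omega)).2
              have hc : ((p - 1 : ℕ) : ℤ) = (p : ℤ) - 1 := by
                push_cast [Nat.cast_sub (by omega : 1 ≤ p)]; ring
              rw [hc] at hinv
              have hB : (0 : ℤ) ≤ b (p - 1 - 1) := (hbpos (p - 1 - 1) (by omega)).le
              have h4 : 4 * ((p.choose 2 : ℤ)) ^ 2 = (p : ℤ) ^ 2 * ((p : ℤ) - 1) ^ 2 := by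
                linear_combination (2 * ((p.choose 2 : ℤ)) + (p : ℤ) * ((p : ℤ) - 1)) * hchz
              have h5 := mul_le_mul_of_nonneg_left hinv (sq_nonneg (p : ℤ))
              nlinarith [h4, h5, hB]
          · -- k ≥ 1
            simp only [hg, if_neg (by omega : k + 1 ≠ 0), if_neg (by omega : k ≠ 0)]
            by_cases hkp : k + 2 ≤ p
            · set m := p - (k + 1) with hm
              have hm1 : 1 ≤ m := by omega
              have e1 : p - 1 - (k + 1) = m - 1 := by omega
              have e2 : p - 1 - k = m := by omega
              rw [e1, e2]
              have hch := Nat.choose_succ_right_eq p (k + 1)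
              have hchz : ((p.choose (k + 2) : ℤ)) * ((k : ℤ) + 2)
                  = ((p.choose (k + 1) : ℤ)) * (m : ℤ) := by
                have := congrArg (Nat.cast : ℕ → ℤ) hch
                push_cast [Nat.cast_sub (by omega : k + 1 ≤ p)] at this
                have hmc : (m : ℤ) = (p : ℤ) - ((k : ℤ) + 1) := by
                  rw [hm]; push_cast [Nat.cast_sub (by omega : k + 1 ≤ p)]; ring
                rw [hmc]
                linarith [this]
              have hinv := (ih m (by omega)).2
              have hB : (0 : ℤ) ≤ b m := (hbpos m (by omega)).le
              have hB' : (0 : ℤ) ≤ b (m - 1) := (hbpos (m - 1) (by omega)).le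
              set x := ((p.choose (k + 1) : ℤ)) with hx
              set y := ((p.choose (k + 2) : ℤ)) with hy
              have hsq : ((k : ℤ) + 2) ^ 2 * y ^ 2 = (m : ℤ) ^ 2 * x ^ 2 := by
                linear_combination (((k : ℤ) + 2) * y + (m : ℤ) * x) * hchz
              have hstep : ((k : ℤ) + 2) ^ 2 * (2 * y ^ 2 * b (m - 1))
                  = 2 * x ^ 2 * ((m : ℤ) ^ 2 * b (m - 1)) := by
                linear_combination (2 * b (m - 1)) * hsq
              have h2 : 2 * x ^ 2 * ((m : ℤ) ^ 2 * b (m - 1)) ≤ 2 * x ^ 2 * (2 * b m) :=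
                mul_le_mul_of_nonneg_left hinv (by positivity)
              have hk0 : (0 : ℤ) ≤ (k : ℤ) := Int.natCast_nonneg k
              have h3 : 2 * x ^ 2 * (2 * b m) ≤ ((k : ℤ) + 2) ^ 2 * (2 * x ^ 2 * b m) := by
                nlinarith [mul_nonneg (sq_nonneg x) hB, hk0,
                  mul_nonneg (mul_nonneg hk0 (sq_nonneg x)) hB,
                  mul_nonneg (mul_nonneg (mul_nonneg hk0 hk0) (sq_nonneg x)) hB]
              have hfin : ((k : ℤ) + 2) ^ 2 * (2 * y ^ 2 * b (m - 1))
                  ≤ ((k : ℤ) + 2) ^ 2 * (2 * x ^ 2 * b m) := by linarith [hstep, h2, h3]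
              exact le_of_mul_le_mul_left hfin (by positivity)
            · -- k + 2 > p : the left choose is zero
              have hzero : p.choose (k + 2) = 0 := Nat.choose_eq_zero_of_lt (by omega)
              rw [hzero]
              have hb := (hbpos (p - 1 - k) (by omega)).le
              have : (0 : ℤ) ≤ ((p.choose (k + 1) : ℤ)) ^ 2 := sq_nonneg _
              push_cast
              nlinarith
        -- the sum identity
        have hT := key p hp
        have hsum : ∑ j ∈ Finset.range p, (-1 : ℤ) ^ j * g j
            = 2 * b p - (p : ℤ) ^ 2 * b (p - 1) := by
          have hsplit : ∀ j ∈ Finset.range p, (-1 : ℤ) ^ j * g j =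
              2 * ((-1 : ℤ) ^ j * ((p.choose (j + 1) : ℤ)) ^ 2 * b (p - 1 - j))
              + (if j = 0 then -((p : ℤ) ^ 2 * b (p - 1)) else 0) := by
            intro j hj
            rcases eq_or_ne j 0 with rfl | hj0
            · simp only [hg, if_pos rfl, pow_zero, one_mul, Nat.choose_one_right,
                Nat.sub_zero, zero_add, eq_self_iff_true, if_true]
              ring
            · simp only [hg, if_neg hj0]
              ring
          rw [Finset.sum_congr rfl hsplit, Finset.sum_add_distrib, ← Finset.mul_sum, ← hT,
            Finset.sum_ite_eq' (Finset.range p) 0]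
          rw [if_pos (Finset.mem_range.mpr hp)]
          ring
        have halt := alt_sum_nonneg g h0 hd p
        rw [hsum] at halt
        have hbp1 : 0 < b (p - 1) := hbpos (p - 1) (by omega)
        have hq : (0 : ℤ) < (p : ℤ) ^ 2 := by
          have : (0 : ℤ) < (p : ℤ) := by exact_mod_cast hp
          positivity
        constructor
        · nlinarith [mul_pos hq hbp1, halt]
        · linarith [halt]
  exact fun p => (main p).1
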